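/- Let 0 < s_min ≤ s_max. There exists a constant κ > 0, depending only on s_min and s_max, such that for every L ≥ 1, every L×L Hermitian matrix R with s_min I_L ≤ R ≤ s_max I_L, and every L×L complex matrix A, the unique solution X = D_R(A) of R X R^{1/2} + R^{1/2} X R = A satisfies ‖D_R(A)‖ ≤ κ ‖A‖, where ‖·‖ denotes the spectral norm. -/

import Mathlib

open Matrix
open scoped ComplexOrder

/-- The spectral (operator) norm of a complex square matrix. -/
noncomputable def specNorm {n : ℕ} (A : Matrix (Fin n) (Fin n) ℂ) : ℝ :=
  ‖Matrix.toEuclideanCLM (𝕜 := ℂ) A‖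

/-- The positive semidefinite square root of a positive semidefinite matrix
(the definition `Matrix.PosSemidef.sqrt` of Mathlib, December 2024, since removed). -/
noncomputable def Matrix.PosSemidef.sqrt {n 𝕜 : Type*} [Fintype n] [RCLike 𝕜] [DecidableEq n]
    {A : Matrix n n 𝕜} (hA : A.PosSemidef) : Matrix n n 𝕜 :=
  hA.1.eigenvectorUnitary.1 * diagonal ((↑) ∘ (√·) ∘ hA.1.eigenvalues) *
    (star hA.1.eigenvectorUnitary : Matrix n n 𝕜)

lemma Matrix.PosSemidef.posSemidef_sqrt {n 𝕜 : Type*} [Fintype n] [RCLike 𝕜] [DecidableEq n]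
    {A : Matrix n n 𝕜} (hA : A.PosSemidef) : hA.sqrt.PosSemidef := by
  unfold Matrix.PosSemidef.sqrt
  have := (PosSemidef.diagonal (R := 𝕜) (d := ((↑) ∘ (√·) ∘ hA.1.eigenvalues)) ?_).mul_mul_conjTranspose_same (hA.1.eigenvectorUnitary.1)
  · simpa [star_eq_conjTranspose] using this
  · intro i; simp [Real.sqrt_nonneg]

lemma Matrix.PosSemidef.sqrt_mul_self {n 𝕜 : Type*} [Fintype n] [RCLike 𝕜] [DecidableEq n]
    {A : Matrix n n 𝕜} (hA : A.PosSemidef) : hA.sqrt * hA.sqrt = A := by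
  set C : Matrix n n 𝕜 := hA.1.eigenvectorUnitary.1
  set E := diagonal ((↑) ∘ (√·) ∘ hA.1.eigenvalues : n → 𝕜)
  have hC : star C * C = 1 := Unitary.star_mul_self_of_mem hA.1.eigenvectorUnitary.2
  have hE : E * E = diagonal ((↑) ∘ hA.1.eigenvalues) := by
    rw [diagonal_mul_diagonal]; congr 1; funext v
    simp [← RCLike.ofReal_mul, Real.mul_self_sqrt (hA.eigenvalues_nonneg v)]
  calc hA.sqrt * hA.sqrt = C * (E * (star C * C) * E) * star C := by
        simp only [Matrix.PosSemidef.sqrt, C, E, Matrix.mul_assoc]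
    _ = A := by
        rw [hC, Matrix.mul_one, hE]
        conv_rhs => rw [hA.1.spectral_theorem]
        simp [Unitary.conjStarAlgAut_apply, Matrix.mul_assoc, C]

open ContinuousLinearMap Module.End
open scoped InnerProductSpace

local notation "⟪" x ", " y "⟫" => @inner ℂ _ _ x y

lemma my_lyapunov_bound {H : Type*} [NormedAddCommGroup H] [InnerProductSpace ℂ H]
    [FiniteDimensional ℂ H] [Nontrivial H]
    (s z a : H →L[ℂ] H) (m : ℝ) (hm : 0 < m)
    (hs : ∀ v : H, m * ‖v‖ ^ 2 ≤ RCLike.re ⟪s v, v⟫)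
    (heq : s * z + z * s = a) :
    ‖z‖ ≤ ‖a‖ / (2 * m) := by
  set T : H →L[ℂ] H := adjoint z * z with hT
  have hTip : ∀ v : H, ⟪(T : H →ₗ[ℂ] H) v, v⟫ = ⟪z v, z v⟫ := by
    intro v
    simp [hT, ContinuousLinearMap.mul_apply, adjoint_inner_left]
  have hray : ∀ v : H, RCLike.re ⟪(T : H →ₗ[ℂ] H) v, v⟫ = ‖z v‖ ^ 2 := by
    intro v
    rw [hTip, inner_self_eq_norm_sq_to_K]
    simp [← Complex.ofReal_pow]
  have hsym : (T : H →ₗ[ℂ] H).IsSymmetric := by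
    intro u v
    simp [hT, ContinuousLinearMap.mul_apply, adjoint_inner_left, adjoint_inner_right]
  set μ : ℝ := ⨆ x : { x : H // x ≠ 0 },
      RCLike.re ⟪(T : H →ₗ[ℂ] H) x, x⟫ / ‖(x : H)‖ ^ 2 with hμ
  have hbdd : BddAbove (Set.range fun x : { x : H // x ≠ 0 } =>
      RCLike.re ⟪(T : H →ₗ[ℂ] H) x, x⟫ / ‖(x : H)‖ ^ 2) := by
    refine ⟨‖z‖ ^ 2, ?_⟩
    rintro y ⟨x, rfl⟩
    have hx : (0:ℝ) < ‖(x:H)‖ := norm_pos_iff.mpr x.2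
    simp only
    rw [hray, div_le_iff₀ (by positivity)]
    have := z.le_opNorm (x:H)
    nlinarith [norm_nonneg (z (x:H)), norm_nonneg z]
  have hle : ∀ x : H, x ≠ 0 → ‖z x‖ ^ 2 / ‖x‖ ^ 2 ≤ μ := by
    intro x hx
    have := le_ciSup hbdd ⟨x, hx⟩
    simp only at this
    rwa [hray] at this
  have hμ0 : 0 ≤ μ := by
    obtain ⟨x, hx⟩ := exists_ne (0 : H)
    have h1 := hle x hx
    have hx' : (0:ℝ) < ‖x‖ := norm_pos_iff.mpr hx
    exact le_trans (by positivity) h1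
  have hz2 : ‖z‖ ^ 2 ≤ μ := by
    have hb : ‖z‖ ≤ Real.sqrt μ := by
      refine z.opNorm_le_bound (Real.sqrt_nonneg μ) fun x => ?_
      rcases eq_or_ne x 0 with rfl | hx
      · simp
      · have hx' : (0:ℝ) < ‖x‖ := norm_pos_iff.mpr hx
        have h1 := (div_le_iff₀ (by positivity)).mp (hle x hx)
        calc ‖z x‖ = Real.sqrt (‖z x‖ ^ 2) := (Real.sqrt_sq (norm_nonneg _)).symm
          _ ≤ Real.sqrt (μ * ‖x‖ ^ 2) := Real.sqrt_le_sqrt h1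
          _ = Real.sqrt μ * ‖x‖ := by
              rw [Real.sqrt_mul hμ0, Real.sqrt_sq (norm_nonneg _)]
    nlinarith [Real.sqrt_nonneg μ, norm_nonneg z, Real.sq_sqrt hμ0]
  rcases eq_or_lt_of_le (norm_nonneg z) with hz0 | hz0
  · rw [← hz0]
    positivity
  -- now μ > 0
  have hμpos : 0 < μ := lt_of_lt_of_le (by nlinarith) hz2
  have heig : HasEigenvalue (T : H →ₗ[ℂ] H) (μ : ℂ) :=
    hsym.hasEigenvalue_iSup_of_finiteDimensional
  obtain ⟨x, hx⟩ := heig.exists_hasEigenvector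
  have hxne : x ≠ 0 := hx.right
  set u : H := (‖x‖ : ℂ)⁻¹ • x with hu
  have hxnorm : (0:ℝ) < ‖x‖ := norm_pos_iff.mpr hxne
  have hunorm : ‖u‖ = 1 := by
    rw [hu, norm_smul]
    simp [norm_inv, abs_of_pos hxnorm]
    field_simp
  have hTu : T u = (μ : ℂ) • u := by
    have h1 : (T : H →ₗ[ℂ] H) x = (μ : ℂ) • x := hx.apply_eq_smul
    have : T u = (‖x‖ : ℂ)⁻¹ • ((μ:ℂ) • x) := by
      rw [hu, _root_.map_smul]
      exact congrArg _ h1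
    rw [this, hu, smul_comm]
  set σ : ℝ := Real.sqrt μ with hσ
  have hσpos : 0 < σ := Real.sqrt_pos.mpr hμpos
  have hσ2 : σ ^ 2 = μ := Real.sq_sqrt hμ0
  have hzu : ‖z u‖ = σ := by
    have h1 : ‖z u‖ ^ 2 = μ := by
      rw [← hray u]
      have : ⟪(T : H →ₗ[ℂ] H) u, u⟫ = (μ:ℂ) * ⟪u, u⟫ := by
        rw [show ((T : H →ₗ[ℂ] H) u) = T u from rfl, hTu, inner_smul_left]
        simp [Complex.conj_ofReal]
      rw [this, inner_self_eq_norm_sq_to_K, hunorm]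
      simp
    nlinarith [norm_nonneg (z u)]
  set w : H := (σ : ℂ)⁻¹ • z u with hw
  have hwnorm : ‖w‖ = 1 := by
    rw [hw, norm_smul, hzu]
    simp [abs_of_pos hσpos]
    field_simp
  have hzuw : z u = (σ : ℂ) • w := by
    rw [hw, smul_smul]
    rw [mul_inv_cancel₀ (by exact_mod_cast hσpos.ne')]
    simp
  have hadj : adjoint z w = (σ : ℂ) • u := by
    have h1 : adjoint z (z u) = T u := rfl
    have hσc : (σ:ℂ) ≠ 0 := Complex.ofReal_ne_zero.mpr hσpos.ne'
    rw [hw, _root_.map_smul, h1, hTu, smul_smul]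
    congr 1
    rw [← hσ2]
    push_cast
    field_simp
  -- main estimate
  have hkey : 2 * m * σ ≤ ‖a‖ := by
    have e1 : RCLike.re ⟪s (z u), w⟫ = σ * RCLike.re ⟪s w, w⟫ := by
      rw [hzuw, _root_.map_smul, inner_smul_left]
      simp [Complex.conj_ofReal]
    have e2 : RCLike.re ⟪z (s u), w⟫ = σ * RCLike.re ⟪s u, u⟫ := by
      have : ⟪z (s u), w⟫ = ⟪s u, adjoint z w⟫ := (adjoint_inner_right z (s u) w).symm
      rw [this, hadj, inner_smul_right]
      simp
    have e3 : RCLike.re ⟪a u, w⟫ = σ * RCLike.re ⟪s w, w⟫ + σ * RCLike.re ⟪s u, u⟫ := by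
      have : a u = s (z u) + z (s u) := by
        rw [← heq]; rfl
      rw [this, inner_add_left, map_add, e1, e2]
    have h4 : RCLike.re ⟪a u, w⟫ ≤ ‖a‖ := by
      have h5 : RCLike.re ⟪a u, w⟫ ≤ ‖⟪a u, w⟫‖ := RCLike.re_le_norm _
      have h6 : ‖⟪a u, w⟫‖ ≤ ‖a u‖ * ‖w‖ := norm_inner_le_norm _ _
      have h7 : ‖a u‖ ≤ ‖a‖ * ‖u‖ := a.le_opNorm u
      rw [hunorm] at h7
      rw [hwnorm] at h6
      linarith
    have h8 := hs w
    have h9 := hs u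
    rw [hwnorm] at h8
    rw [hunorm] at h9
    simp only [one_pow, mul_one] at h8 h9
    nlinarith
  have : ‖z‖ ≤ σ := by nlinarith [norm_nonneg z]
  rw [le_div_iff₀ (by linarith)]
  nlinarith

lemma my_psd_re_nonneg {L : ℕ} {P : Matrix (Fin L) (Fin L) ℂ} (hP : P.PosSemidef)
    (v : EuclideanSpace ℂ (Fin L)) :
    0 ≤ (⟪v, toEuclideanCLM (𝕜 := ℂ) P v⟫).re := by
  have h1 : ⟪v, toEuclideanCLM (𝕜 := ℂ) P v⟫ =
      dotProduct (star (WithLp.equiv 2 _ v)) (P *ᵥ (WithLp.equiv 2 _ v)) := by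
    rw [EuclideanSpace.inner_eq_star_dotProduct, dotProduct_comm]; rfl
  rw [h1]
  exact (Complex.le_def.mp (hP.dotProduct_mulVec_nonneg _)).1


set_option maxHeartbeats 4000000 in
/-- uniform spectral-norm bound for the operator `D_R`, the
unique solution of `R X R^{1/2} + R^{1/2} X R = A`, when `s_min I ≤ R ≤ s_max I`. -/
theorem sylvester_sqrt_specNorm_bound (s_min s_max : ℝ)
    (h0 : 0 < s_min) (h1 : s_min ≤ s_max) :
    ∃ κ : ℝ, 0 < κ ∧
      ∀ (L : ℕ), 1 ≤ L →
        ∀ (R : Matrix (Fin L) (Fin L) ℂ) (hR : R.PosSemidef),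
          (R - (s_min : ℂ) • 1).PosSemidef →
          ((s_max : ℂ) • 1 - R).PosSemidef →
          ∀ A X : Matrix (Fin L) (Fin L) ℂ,
            R * X * hR.sqrt + hR.sqrt * X * R = A →
            specNorm X ≤ κ * specNorm A := by
  refine ⟨Real.sqrt s_max ^ 3 / (2 * s_min ^ 3),
    div_pos (pow_pos (Real.sqrt_pos.mpr (lt_of_lt_of_le h0 h1)) 3) (by positivity), ?_⟩
  intro L hL R hR hlow hupp A X heqM
  unfold specNorm
  have hsmax : 0 < s_max := lt_of_lt_of_le h0 h1
  have hrt : (0:ℝ) < Real.sqrt s_max := Real.sqrt_pos.mpr hsmax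
  set H := EuclideanSpace ℂ (Fin L) with hH
  haveI : Nontrivial H := by
    apply Module.nontrivial_of_finrank_pos (R := ℂ)
    rw [finrank_euclideanSpace_fin]
    omega
  set e := toEuclideanCLM (𝕜 := ℂ) (n := Fin L) with he
  set r : H →L[ℂ] H := e R with hr
  set s : H →L[ℂ] H := e hR.sqrt with hs
  set x : H →L[ℂ] H := e X with hx
  set a : H →L[ℂ] H := e A with ha
  -- self-adjointness
  have hs_sa : star s = s := by
    rw [hs, ← map_star]
    congr 1
    exact hR.posSemidef_sqrt.1
  have hr_sa : star r = r := by
    rw [hr, ← map_star]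
    congr 1
    exact hR.1
  have hss : s * s = r := by rw [hs, hr, ← _root_.map_mul, hR.sqrt_mul_self]
  set q : H →L[ℂ] H := e hR.posSemidef_sqrt.sqrt with hq
  have hq_sa : star q = q := by
    rw [hq, ← map_star]
    congr 1
    exact hR.posSemidef_sqrt.posSemidef_sqrt.1
  have hqq : q * q = s := by rw [hq, hs, ← _root_.map_mul, hR.posSemidef_sqrt.sqrt_mul_self]
  have hq_adj : adjoint q = q := by rw [← star_eq_adjoint, hq_sa]
  have hs_adj : adjoint s = s := by rw [← star_eq_adjoint, hs_sa]
  have hr_adj : adjoint r = r := by rw [← star_eq_adjoint, hr_sa]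
  -- quadratic form bounds for r
  have hr_quad : ∀ v : H, ⟪v, r v⟫ = ⟪s v, s v⟫ := by
    intro v
    have : r v = s (s v) := by rw [← hss]; rfl
    rw [this, ← hs_adj, adjoint_inner_right, hs_adj]
  have hs_quad : ∀ v : H, ⟪v, s v⟫ = ⟪q v, q v⟫ := by
    intro v
    have : s v = q (q v) := by rw [← hqq]; rfl
    rw [this, ← hq_adj, adjoint_inner_right, hq_adj]
  have hsv_sq : ∀ v : H, (⟪v, r v⟫).re = ‖s v‖ ^ 2 := by
    intro v
    rw [hr_quad v, inner_self_eq_norm_sq_to_K]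
    simp [← Complex.ofReal_pow]
  have hqv_sq : ∀ v : H, (⟪v, s v⟫).re = ‖q v‖ ^ 2 := by
    intro v
    rw [hs_quad v, inner_self_eq_norm_sq_to_K]
    simp [← Complex.ofReal_pow]
  have hr_lo : ∀ v : H, s_min * ‖v‖ ^ 2 ≤ (⟪v, r v⟫).re := by
    intro v
    have h2 := my_psd_re_nonneg hlow v
    have h3 : toEuclideanCLM (𝕜 := ℂ) (R - (s_min:ℂ) • 1) = r - (s_min : ℂ) • 1 := by
      show e (R - (s_min:ℂ) • 1) = _
      rw [map_sub, _root_.map_smul, _root_.map_one]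
    rw [h3] at h2
    have h4 : (⟪v, (r - (s_min : ℂ) • (1 : H →L[ℂ] H)) v⟫).re
        = (⟪v, r v⟫).re - s_min * ‖v‖ ^ 2 := by
      rw [ContinuousLinearMap.sub_apply, ContinuousLinearMap.smul_apply,
        ContinuousLinearMap.one_apply, inner_sub_right, inner_smul_right]
      have hvv : (⟪v, v⟫).re = ‖v‖ ^ 2 := inner_self_eq_norm_sq (𝕜 := ℂ) v
      have hvi : (⟪v, v⟫).im = 0 := inner_self_im (𝕜 := ℂ) v
      simp [Complex.sub_re, Complex.mul_re, hvi, hvv, ← Complex.ofReal_pow]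
    rw [h4] at h2
    linarith
  have hr_hi : ∀ v : H, (⟪v, r v⟫).re ≤ s_max * ‖v‖ ^ 2 := by
    intro v
    have h2 := my_psd_re_nonneg hupp v
    have h3 : toEuclideanCLM (𝕜 := ℂ) ((s_max:ℂ) • 1 - R) = (s_max : ℂ) • 1 - r := by
      show e ((s_max:ℂ) • 1 - R) = _
      rw [map_sub, _root_.map_smul, _root_.map_one]
    rw [h3] at h2
    have h4 : (⟪v, ((s_max : ℂ) • (1 : H →L[ℂ] H) - r) v⟫).re
        = s_max * ‖v‖ ^ 2 - (⟪v, r v⟫).re := by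
      rw [ContinuousLinearMap.sub_apply, ContinuousLinearMap.smul_apply,
        ContinuousLinearMap.one_apply, inner_sub_right, inner_smul_right]
      have hvv : (⟪v, v⟫).re = ‖v‖ ^ 2 := inner_self_eq_norm_sq (𝕜 := ℂ) v
      have hvi : (⟪v, v⟫).im = 0 := inner_self_im (𝕜 := ℂ) v
      simp [Complex.sub_re, Complex.mul_re, hvi, hvv, ← Complex.ofReal_pow]
    rw [h4] at h2
    linarith
  -- norm bounds
  have hr_norm : ‖r‖ ≤ s_max := by
    refine r.opNorm_le_bound (le_of_lt hsmax) fun v => ?_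
    have h1 : ‖r v‖ ^ 2 = (⟪s v, r (s v)⟫).re := by
      have e1 : ⟪r v, r v⟫ = ⟪v, r (r v)⟫ := by
        have h := adjoint_inner_right r v (r v)
        rw [hr_adj] at h
        exact h.symm
      have e2 : r (r v) = s (r (s v)) := by
        have : r * r = s * r * s := by rw [← hss]; noncomm_ring
        calc r (r v) = (r * r) v := rfl
          _ = (s * r * s) v := by rw [this]
          _ = s (r (s v)) := rfl
      have e3 : ⟪v, s (r (s v))⟫ = ⟪s v, r (s v)⟫ := by
        have h := adjoint_inner_right s v (r (s v))
        rw [hs_adj] at h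
        exact h
      have : ‖r v‖ ^ 2 = (⟪r v, r v⟫).re := by
        rw [inner_self_eq_norm_sq_to_K]
        simp [← Complex.ofReal_pow]
      rw [this, e1, e2, e3]
    have h2 : (⟪s v, r (s v)⟫).re ≤ s_max * ‖s v‖ ^ 2 := hr_hi (s v)
    have h3 : ‖s v‖ ^ 2 ≤ s_max * ‖v‖ ^ 2 := by
      rw [← hsv_sq v]; exact hr_hi v
    have h4 : ‖r v‖ ^ 2 ≤ s_max ^ 2 * ‖v‖ ^ 2 := by nlinarith [h1, h2, h3, hsmax.le]
    nlinarith [norm_nonneg (r v), mul_nonneg hsmax.le (norm_nonneg v)]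
  have hs_norm : ‖s‖ ≤ Real.sqrt s_max := by
    have h1 : ‖s‖ * ‖s‖ = ‖r‖ := by
      rw [← hss]
      conv_lhs => rw [← CStarRing.norm_star_mul_self (x := s), hs_sa]
    nlinarith [norm_nonneg s, Real.sqrt_nonneg s_max, Real.sq_sqrt hsmax.le, hr_norm]
  -- key coercivity of s
  set m : ℝ := s_min / Real.sqrt s_max with hm_def
  have hm : 0 < m := div_pos h0 hrt
  have hkey : ∀ v : H, m * ‖v‖ ^ 2 ≤ (⟪s v, v⟫).re := by
    intro v
    have hre : (⟪s v, v⟫).re = (⟪v, s v⟫).re := by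
      have hcs : (starRingEnd ℂ) ⟪v, s v⟫ = ⟪s v, v⟫ := inner_conj_symm (s v) v
      rw [← hcs]
      exact Complex.conj_re _
    rw [hre]
    -- step 1 : (⟪v, r v⟫).re ≤ ‖s‖ * (⟪v, s v⟫).re
    have st1 : (⟪v, r v⟫).re ≤ Real.sqrt s_max * (⟪v, s v⟫).re := by
      have e1 : (⟪v, r v⟫).re = ‖s v‖ ^ 2 := hsv_sq v
      have e2 : s v = q (q v) := by rw [← hqq]; rfl
      have e3 : ‖s v‖ ^ 2 = (⟪q v, s (q v)⟫).re := by rw [e2, ← hqv_sq (q v)]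
      have e4 : (⟪q v, s (q v)⟫).re ≤ ‖s‖ * ‖q v‖ ^ 2 := by
        have c1 : (⟪q v, s (q v)⟫).re ≤ ‖(⟪q v, s (q v)⟫ : ℂ)‖ := Complex.re_le_norm _
        have c2 : ‖(⟪q v, s (q v)⟫ : ℂ)‖ ≤ ‖q v‖ * ‖s (q v)‖ := norm_inner_le_norm _ _
        have c3 : ‖s (q v)‖ ≤ ‖s‖ * ‖q v‖ := s.le_opNorm _
        nlinarith [norm_nonneg (q v), norm_nonneg s]
      have e5 : ‖s‖ * ‖q v‖ ^ 2 ≤ Real.sqrt s_max * ‖q v‖ ^ 2 := by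
        nlinarith [sq_nonneg ‖q v‖, hs_norm]
      calc (⟪v, r v⟫).re = (⟪q v, s (q v)⟫).re := by rw [e1, e3]
        _ ≤ ‖s‖ * ‖q v‖ ^ 2 := e4
        _ ≤ Real.sqrt s_max * ‖q v‖ ^ 2 := e5
        _ = Real.sqrt s_max * (⟪v, s v⟫).re := by rw [hqv_sq v]
    have st2 : s_min * ‖v‖ ^ 2 ≤ (⟪v, r v⟫).re := hr_lo v
    rw [hm_def, div_mul_eq_mul_div, div_le_iff₀ hrt]
    calc s_min * ‖v‖ ^ 2 ≤ (⟪v, r v⟫).re := st2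
      _ ≤ Real.sqrt s_max * (⟪v, s v⟫).re := st1
      _ = (⟪v, s v⟫).re * Real.sqrt s_max := by ring
  -- Lyapunov step
  set z : H →L[ℂ] H := s * x * s with hz_def
  have heqz : s * z + z * s = a := by
    have h' := congrArg e heqM
    rw [map_add, _root_.map_mul, _root_.map_mul, _root_.map_mul, _root_.map_mul] at h'
    rw [← hr, ← hs, ← hx, ← ha] at h'
    rw [hz_def, ← h', ← hss]
    noncomm_ring
  have hkey' : ∀ v : H, m * ‖v‖ ^ 2 ≤ RCLike.re ⟪s v, v⟫ := fun v => hkey v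
  have hz_bound : ‖z‖ ≤ ‖a‖ / (2 * m) := my_lyapunov_bound s z a m hm hkey' heqz
  -- lower bound for s, invertibility
  have hsv_lb : ∀ v : H, m * ‖v‖ ≤ ‖s v‖ := by
    intro v
    rcases eq_or_ne v 0 with rfl | hv
    · simp
    · have h1 := hkey v
      have h2 : (⟪s v, v⟫).re ≤ ‖s v‖ * ‖v‖ := by
        have c1 : (⟪s v, v⟫).re ≤ ‖(⟪s v, v⟫ : ℂ)‖ := Complex.re_le_norm _
        have c2 : ‖(⟪s v, v⟫ : ℂ)‖ ≤ ‖s v‖ * ‖v‖ := norm_inner_le_norm _ _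
        linarith
      have hv' : 0 < ‖v‖ := norm_pos_iff.mpr hv
      nlinarith
  have hinj : Function.Injective s := by
    intro v w hvw
    have h1 : s (v - w) = 0 := by rw [map_sub, hvw, sub_self]
    have h2 := hsv_lb (v - w)
    rw [h1, norm_zero] at h2
    have h3 : ‖v - w‖ = 0 :=
      le_antisymm (by nlinarith [norm_nonneg (v - w)]) (norm_nonneg _)
    rwa [norm_sub_eq_zero_iff] at h3
  have hsurj : Function.Surjective s :=
    (LinearMap.injective_iff_surjective (f := (s : H →ₗ[ℂ] H))).mp hinj
  -- transfer bound from z to x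
  have hx_bound : ‖x‖ ≤ ‖z‖ / (m * m) := by
    refine x.opNorm_le_bound (by positivity) fun v => ?_
    obtain ⟨u, rfl⟩ := hsurj v
    have h2 : z u = s (x (s u)) := by
      rw [hz_def]
      simp only [ContinuousLinearMap.mul_apply]
    have hb1 : m * ‖x (s u)‖ ≤ ‖z u‖ := by
      rw [h2]
      exact hsv_lb (x (s u))
    have hb3 : ‖z u‖ ≤ ‖z‖ * ‖u‖ := z.le_opNorm u
    have hb4 : m * ‖u‖ ≤ ‖s u‖ := hsv_lb u
    rw [div_mul_eq_mul_div, le_div_iff₀ (by positivity)]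
    have harith : ∀ P Q U SU Z : ℝ, 0 ≤ P → 0 ≤ U → 0 ≤ Z →
        m * P ≤ Q → Q ≤ Z * U → m * U ≤ SU → P * (m * m) ≤ Z * SU := by
      intro P Q U SU Z hP hU hZ a1 a2 a3
      nlinarith [mul_le_mul_of_nonneg_left a2 hm.le, mul_le_mul_of_nonneg_left a3 hZ,
        mul_le_mul_of_nonneg_left a1 hm.le]
    exact harith _ _ _ _ _ (norm_nonneg _) (norm_nonneg _) (norm_nonneg _) hb1 hb3 hb4
  -- conclusion
  have hfinal : ‖x‖ ≤ Real.sqrt s_max ^ 3 / (2 * s_min ^ 3) * ‖a‖ := by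
    have hmono : ‖z‖ / (m * m) ≤ (‖a‖ / (2 * m)) / (m * m) := by
      gcongr
    have hκ : (‖a‖ / (2 * m)) / (m * m) = Real.sqrt s_max ^ 3 / (2 * s_min ^ 3) * ‖a‖ := by
      rw [hm_def]
      field_simp
    linarith [hx_bound]
  exact hfinal
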